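/- Let Γ_K(u) := u (log̃ u)² for 0 ≤ u ≤ K and Γ_K(u) := (2 + log K) u log u − 2K log K for u > K, where K ≥ e² and log̃ u := 1 for u ≤ e and log u for u > e. Then Γ_K is convex on [0,∞) and for all u > 0, Γ_K''(u) ≥ (log̃_K u)/u · 1_{u ≥ e}, where log̃_K u := 1 for u ≤ e, log u for e < u ≤ K, and log K for u > K (second derivative understood away from the finitely many junction points). -/

import Mathlib

open Real Set Filter Topology

theorem myConvexOn_congr {f g : ℝ → ℝ} {s : Set ℝ} (h : ConvexOn ℝ s f)
    (he : Set.EqOn f g s) : ConvexOn ℝ s g := by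
  refine ⟨h.1, fun x hx y hy a b ha hb hab => ?_⟩
  rw [← he hx, ← he hy, ← he (h.1 hx hy ha hb hab)]
  exact h.2 hx hy ha hb hab

theorem myGlue {f : ℝ → ℝ} {s : Set ℝ} (hs : Convex ℝ s) {a : ℝ}
    (h1 : ConvexOn ℝ (s ∩ Iic a) f) (h2 : ConvexOn ℝ (s ∩ Ici a) f)
    (hcross : ∀ x ∈ s, ∀ z ∈ s, x < a → a < z →
      (f a - f x) / (a - x) ≤ (f z - f a) / (z - a)) :
    ConvexOn ℝ s f := by
  apply convexOn_of_slope_mono_adjacent hs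
  intro x y z hx hz hxy hyz
  have hy : y ∈ s := hs.ordConnected.out hx hz ⟨hxy.le, hyz.le⟩
  rcases le_or_gt z a with hza | haz
  · exact h1.slope_mono_adjacent ⟨hx, (hxy.trans hyz).le.trans hza⟩ ⟨hz, hza⟩ hxy hyz
  rcases le_or_gt a x with hax | hxa
  · exact h2.slope_mono_adjacent ⟨hx, hax⟩ ⟨hz, hax.trans (hxy.trans hyz).le⟩ hxy hyz
  rcases lt_trichotomy y a with hya | rfl | hay
  · have ha : a ∈ s := hs.ordConnected.out hx hz ⟨hxa.le, haz.le⟩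
    have s1 : (f y - f x) / (y - x) ≤ (f a - f y) / (a - y) :=
      h1.slope_mono_adjacent ⟨hx, hxa.le⟩ ⟨ha, le_refl a⟩ hxy hya
    have s2 : (f a - f y) / (a - y) ≤ (f z - f a) / (z - a) := hcross y hy z hz hya haz
    refine s1.trans ?_
    rw [div_le_div_iff₀ (by linarith) (by linarith)] at *
    nlinarith [s2, sub_pos.2 hya, sub_pos.2 haz, sub_pos.2 hyz]
  · exact hcross x hx z hz hxy hyz
  · have ha : a ∈ s := hs.ordConnected.out hx hz ⟨hxa.le, haz.le⟩
    have s2 : (f y - f a) / (y - a) ≤ (f z - f y) / (z - y) :=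
      h2.slope_mono_adjacent ⟨ha, le_refl a⟩ ⟨hz, (hay.trans hyz).le⟩ hay hyz
    have s1 : (f a - f x) / (a - x) ≤ (f y - f a) / (y - a) := hcross x hx y hy hxa hay
    refine le_trans ?_ s2
    rw [div_le_div_iff₀ (by linarith) (by linarith)] at *
    nlinarith [s1, sub_pos.2 hxa, sub_pos.2 hay, sub_pos.2 hxy]

set_option maxHeartbeats 1600000 in
/-- The renormalization function `Γ_K(u) = u(log̃ u)²` for `u ≤ K` and
`(2+log K)u log u − 2K log K` for `u > K` (with `K ≥ e²`,
`log̃ u = max(1, log u)`) is convex on `[0,∞)` and satisfies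
`Γ_K''(u) ≥ (log̃_K u)/u · 1_{u ≥ e}` away from the junction points
`u = e, K`. -/
theorem GammaK_convex_and_second_deriv_bound
    (K : ℝ) (hK : Real.exp 1 ^ 2 ≤ K)
    (Γ : ℝ → ℝ)
    (hΓ : ∀ u : ℝ, Γ u =
      if u ≤ K then u * (max 1 (Real.log u)) ^ 2
      else (2 + Real.log K) * u * Real.log u - 2 * K * Real.log K) :
    ConvexOn ℝ (Set.Ici 0) Γ ∧
      ∀ u : ℝ, 0 < u → u ≠ Real.exp 1 → u ≠ K →
        (if Real.exp 1 ≤ u then min (max 1 (Real.log u)) (Real.log K) / u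
          else 0) ≤ deriv (deriv Γ) u := by
  set E : ℝ := Real.exp 1 with hEdef
  set L : ℝ := Real.log K with hLdef
  have hE27 : (2.7 : ℝ) < E := by
    have := Real.exp_one_gt_d9; rw [hEdef]; linarith
  have hE0 : (0:ℝ) < E := by linarith
  have hE1 : (1:ℝ) < E := by linarith
  have hEE : E < E ^ 2 := by nlinarith
  have hEK : E < K := lt_of_lt_of_le hEE hK
  have hK0 : (0:ℝ) < K := hE0.trans hEK
  have hlogE : Real.log E = 1 := Real.log_exp 1
  have hL2 : 2 ≤ L := by
    have h := Real.log_le_log (by positivity : (0:ℝ) < E ^ 2) hK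
    rw [Real.log_pow, hlogE] at h
    rw [hLdef]; push_cast at h; linarith
  -- piecewise descriptions
  have eqlow : ∀ v : ℝ, 0 ≤ v → v ≤ E → Γ v = v := by
    intro v hv0 hvE
    rw [hΓ, if_pos (hvE.trans hEK.le)]
    have hlv : Real.log v ≤ 1 := by
      rcases eq_or_lt_of_le hv0 with h | h
      · simp [← h]
      · rw [← hlogE]; exact Real.log_le_log h hvE
    rw [max_eq_left hlv]; ring
  have eqmid : ∀ v : ℝ, E ≤ v → v ≤ K → Γ v = v * (Real.log v) ^ 2 := by
    intro v hvE hvK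
    rw [hΓ, if_pos hvK]
    have hlv : 1 ≤ Real.log v := by rw [← hlogE]; exact Real.log_le_log hE0 hvE
    rw [max_eq_right hlv]
  have eqhigh : ∀ v : ℝ, K < v →
      Γ v = (2 + L) * v * Real.log v - 2 * K * L := by
    intro v hv; rw [hΓ, if_neg (not_le.2 hv)]
  have ΓE : Γ E = E := eqlow E hE0.le le_rfl
  have ΓK : Γ K = K * L ^ 2 := eqmid K hEK.le le_rfl
  -- derivative helpers
  have hg : ∀ v : ℝ, v ≠ 0 →
      HasDerivAt (fun w => w * (Real.log w) ^ 2)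
        ((Real.log v) ^ 2 + 2 * Real.log v) v := by
    intro v hv
    have h1 : HasDerivAt (fun w => (Real.log w) ^ 2) (2 * Real.log v * v⁻¹) v := by
      simpa using (Real.hasDerivAt_log hv).fun_pow 2
    have h2 := (hasDerivAt_id' v).fun_mul h1
    refine h2.congr_deriv ?_
    have hvv : v * v⁻¹ = 1 := mul_inv_cancel₀ hv
    linear_combination (2 * Real.log v) * hvv
  -- convexity of middle piece
  have cg : ConvexOn ℝ (Icc E K) (fun v => v * (Real.log v) ^ 2) := by
    apply MonotoneOn.convexOn_of_deriv (convex_Icc E K)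
    · intro v hv
      have hv0 : v ≠ 0 := (hE0.trans_le hv.1).ne'
      exact ((hg v hv0).differentiableAt).continuousAt.continuousWithinAt
    · rw [interior_Icc]
      intro v hv
      have hv0 : v ≠ 0 := (hE0.trans hv.1).ne'
      exact ((hg v hv0).differentiableAt).differentiableWithinAt
    · rw [interior_Icc]
      intro x hx y hy hxy
      have hx0 : (0:ℝ) < x := hE0.trans hx.1
      have hy0 : (0:ℝ) < y := hE0.trans hy.1
      rw [(hg x hx0.ne').deriv, (hg y hy0.ne').deriv]
      have h1 : 1 ≤ Real.log x := by rw [← hlogE]; exact Real.log_le_log hE0 hx.1.le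
      have h2 : Real.log x ≤ Real.log y := Real.log_le_log hx0 hxy
      nlinarith
  have clow : ConvexOn ℝ (Icc 0 E) Γ :=
    myConvexOn_congr (convexOn_id (convex_Icc 0 E))
      (fun v hv => (eqlow v hv.1 hv.2).symm)
  have cmid : ConvexOn ℝ (Icc E K) Γ :=
    myConvexOn_congr cg (fun v hv => (eqmid v hv.1 hv.2).symm)
  have cIccK : ConvexOn ℝ (Icc 0 K) Γ := by
    have hset1 : Icc (0:ℝ) K ∩ Iic E = Icc 0 E := by
      ext v
      constructor
      · rintro ⟨⟨h1, _⟩, h3⟩; exact ⟨h1, h3⟩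
      · rintro ⟨h1, h2⟩; exact ⟨⟨h1, h2.trans hEK.le⟩, h2⟩
    have hset2 : Icc (0:ℝ) K ∩ Ici E = Icc E K := by
      ext v
      constructor
      · rintro ⟨⟨_, h2⟩, h3⟩; exact ⟨h3, h2⟩
      · rintro ⟨h1, h2⟩; exact ⟨⟨hE0.le.trans h1, h2⟩, h1⟩
    apply myGlue (convex_Icc 0 K)
    · rw [hset1]; exact clow
    · rw [hset2]; exact cmid
    · intro x hx z hz hxE hEz
      have h1 : (Γ E - Γ x) / (E - x) = 1 := by
        rw [ΓE, eqlow x hx.1 hxE.le]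
        exact div_self (by linarith)
      rw [h1, eqmid z hEz.le hz.2, ΓE, le_div_iff₀ (by linarith)]
      have hz0 : (0:ℝ) < z := hE0.trans hEz
      have hlz : 1 ≤ Real.log z := by rw [← hlogE]; exact Real.log_le_log hE0 hEz.le
      have hzz : z * 1 ≤ z * (Real.log z) ^ 2 :=
        mul_le_mul_of_nonneg_left (by nlinarith) hz0.le
      nlinarith [hzz]
  have chigh : ConvexOn ℝ (Ici K) Γ := by
    have cB1 : ConvexOn ℝ (Ici K) (fun v => v * Real.log v) :=
      Real.convexOn_mul_log.subset (Ici_subset_Ici.2 hK0.le) (convex_Ici K)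
    have cB2 : ConvexOn ℝ (Ici K)
        (fun v => (2 + L) • (v * Real.log v) + (-(2 * K * L))) :=
      ((cB1.smul (by linarith : (0:ℝ) ≤ 2 + L)).add (convexOn_const _ (convex_Ici K)))
    apply myConvexOn_congr cB2
    intro v hv
    rcases eq_or_lt_of_le (Set.mem_Ici.1 hv) with h | h
    · rw [← h, ΓK]; simp only [smul_eq_mul]; ring
    · rw [eqhigh v h]; simp only [smul_eq_mul]; ring
  have cross2 : ∀ x ∈ Ici (0:ℝ), ∀ z ∈ Ici (0:ℝ), x < K → K < z →
      (Γ K - Γ x) / (K - x) ≤ (Γ z - Γ K) / (z - K) := by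
    intro x hx z hz hxK hKz
    have hMle : (Γ K - Γ x) / (K - x) ≤ L ^ 2 + 2 * L := by
      rw [div_le_iff₀ (by linarith), ΓK]
      rcases le_or_gt x E with hxE | hEx
      · rw [eqlow x hx hxE]
        have hE2 : Real.exp 2 = E ^ 2 := by
          rw [show (2:ℝ) = 1 + 1 by norm_num, Real.exp_add]; rw [hEdef]; ring
        have hKL : Real.exp L = K := Real.exp_log hK0
        have hexp : E ^ 2 * (L - 1) ≤ K := by
          have h2 := Real.add_one_le_exp (L - 2)
          have h3 : Real.exp L = Real.exp 2 * Real.exp (L - 2) := by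
            rw [← Real.exp_add]; ring_nf
          nlinarith [Real.exp_pos (L - 2), sq_nonneg E]
        nlinarith [hx, hxE, hL2, hexp, hE27, hE0, sq_nonneg (L - 2), sq_nonneg E]
      · have hx0 : (0:ℝ) < x := hE0.trans hEx
        rw [eqmid x hEx.le hxK.le]
        have hlx1 : 1 ≤ Real.log x := by rw [← hlogE]; exact Real.log_le_log hE0 hEx.le
        have hlxL : Real.log x ≤ L := Real.log_le_log hx0 hxK.le
        have key : L - Real.log x ≤ (K - x) / x := by
          have h := Real.log_le_sub_one_of_pos (show (0:ℝ) < K / x by positivity)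
          rw [Real.log_div hK0.ne' hx0.ne'] at h
          have : K / x - 1 = (K - x) / x := by field_simp
          rw [this] at h; rw [hLdef]; linarith
        have key' : x * (L - Real.log x) ≤ K - x := by
          rw [mul_comm]
          exact (le_div_iff₀ hx0).1 key
        have h1 : x * (L - Real.log x) * (L + Real.log x) ≤ (K - x) * (L + Real.log x) :=
          mul_le_mul_of_nonneg_right key' (by linarith)
        have h2 : (K - x) * (L + Real.log x) ≤ (K - x) * (2 * L) :=
          mul_le_mul_of_nonneg_left (by linarith) (by linarith)
        nlinarith [h1, h2]
    have hMge : L ^ 2 + 2 * L ≤ (Γ z - Γ K) / (z - K) := by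
      rw [le_div_iff₀ (by linarith), eqhigh z hKz, ΓK]
      have hz0 : (0:ℝ) < z := hK0.trans hKz
      have hlz : L ≤ Real.log z := Real.log_le_log hK0 hKz.le
      nlinarith [mul_le_mul_of_nonneg_left hlz hz0.le, hL2, hz0]
    exact hMle.trans hMge
  have hconv : ConvexOn ℝ (Set.Ici 0) Γ := by
    have hset3 : Ici (0:ℝ) ∩ Iic K = Icc 0 K := Ici_inter_Iic
    have hset4 : Ici (0:ℝ) ∩ Ici K = Ici K := by
      rw [Ici_inter_Ici, max_eq_right hK0.le]
    apply myGlue (convex_Ici 0)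
    · rw [hset3]; exact cIccK
    · rw [hset4]; exact chigh
    · exact cross2
  refine ⟨hconv, ?_⟩
  intro u hu0 huE huK
  rcases lt_trichotomy u E with h | h | h
  · rw [if_neg (not_le.2 h)]
    have hnb : Ioo (0:ℝ) E ∈ 𝓝 u := isOpen_Ioo.mem_nhds ⟨hu0, h⟩
    have hev : Γ =ᶠ[𝓝 u] (fun v => v) :=
      eventually_of_mem hnb (fun v hv => eqlow v hv.1.le hv.2.le)
    have heq : deriv (deriv Γ) u = deriv (deriv (fun v : ℝ => v)) u :=
      (hev.deriv).deriv_eq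
    rw [heq]
    simp
  · exact absurd h huE
  · rw [if_pos h.le]
    have hlu1 : 1 ≤ Real.log u := by rw [← hlogE]; exact Real.log_le_log hE0 h.le
    have hui : (0:ℝ) < u⁻¹ := inv_pos.2 hu0
    rcases lt_trichotomy u K with hK' | hK' | hK'
    · -- e < u < K
      have hnb : Ioo E K ∈ 𝓝 u := isOpen_Ioo.mem_nhds ⟨h, hK'⟩
      have hev : Γ =ᶠ[𝓝 u] (fun v => v * (Real.log v) ^ 2) :=
        eventually_of_mem hnb (fun v hv => eqmid v hv.1.le hv.2.le)
      have hev2 : deriv (fun v => v * (Real.log v) ^ 2) =ᶠ[𝓝 u]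
          (fun v => (Real.log v) ^ 2 + 2 * Real.log v) :=
        eventually_of_mem (isOpen_Ioi.mem_nhds (show (0:ℝ) < u from hu0))
          (fun v hv => (hg v (ne_of_gt hv)).deriv)
      have heq : deriv (deriv Γ) u =
          deriv (fun v => (Real.log v) ^ 2 + 2 * Real.log v) u :=
        ((hev.deriv).trans hev2).deriv_eq
      have hd : HasDerivAt (fun v => (Real.log v) ^ 2 + 2 * Real.log v)
          (2 * Real.log u * u⁻¹ + 2 * u⁻¹) u := by
        have h1 : HasDerivAt (fun w => (Real.log w) ^ 2) (2 * Real.log u * u⁻¹) u := by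
          simpa using (Real.hasDerivAt_log hu0.ne').fun_pow 2
        exact h1.add ((Real.hasDerivAt_log hu0.ne').const_mul 2)
      rw [heq, hd.deriv]
      have hluL : Real.log u ≤ L := Real.log_le_log hu0 hK'.le
      rw [max_eq_right hlu1, min_eq_left hluL, div_eq_mul_inv]
      nlinarith [mul_le_mul_of_nonneg_right (show Real.log u ≤ 2 * Real.log u + 2 by linarith) hui.le]
    · exact absurd hK' huK
    · -- u > K
      have hluL : L ≤ Real.log u := Real.log_le_log hK0 hK'.le
      have hnb : Ioi K ∈ 𝓝 u := isOpen_Ioi.mem_nhds hK'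
      have hev : Γ =ᶠ[𝓝 u]
          (fun v => (2 + L) * v * Real.log v - 2 * K * L) :=
        eventually_of_mem hnb (fun v hv => eqhigh v hv)
      have hBd : ∀ v : ℝ, v ≠ 0 →
          HasDerivAt (fun w => (2 + L) * w * Real.log w - 2 * K * L)
            ((2 + L) * (Real.log v + 1)) v := by
        intro v hv
        have h1 : HasDerivAt (fun w => w * Real.log w) (Real.log v + 1) v := by
          have h0 := (hasDerivAt_id' v).fun_mul (Real.hasDerivAt_log hv)
          refine h0.congr_deriv ?_
          linear_combination (mul_inv_cancel₀ hv)
        have h2 := (h1.const_mul (2 + L)).sub_const (2 * K * L)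
        have h3 : (fun w => (2 + L) * (w * Real.log w) - 2 * K * L)
            = (fun w => (2 + L) * w * Real.log w - 2 * K * L) := by
          funext w; ring
        rw [← h3]
        exact h2
      have hev2 : deriv (fun v => (2 + L) * v * Real.log v - 2 * K * L) =ᶠ[𝓝 u]
          (fun v => (2 + L) * (Real.log v + 1)) :=
        eventually_of_mem (isOpen_Ioi.mem_nhds (show (0:ℝ) < u from hu0))
          (fun v hv => (hBd v (ne_of_gt hv)).deriv)
      have heq : deriv (deriv Γ) u =
          deriv (fun v => (2 + L) * (Real.log v + 1)) u :=
        ((hev.deriv).trans hev2).deriv_eq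
      have hd : HasDerivAt (fun v => (2 + L) * (Real.log v + 1)) ((2 + L) * u⁻¹) u :=
        ((Real.hasDerivAt_log hu0.ne').add_const 1).const_mul (2 + L)
      rw [heq, hd.deriv]
      rw [max_eq_right hlu1, min_eq_right hluL, div_eq_mul_inv]
      nlinarith [mul_le_mul_of_nonneg_right (show L ≤ 2 + L by linarith) hui.le]
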